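/- arXiv:2103.14389 — 4 statements merged into one kernel-verified Lean document; each statement's English description precedes it below -/
import Mathlib

section
/- Let (M,d) be a complete geodesic space and f : M → ℝ be geodesically α-convex and L-Lipschitz for some α, L > 0. Then f is geodesically β-expconcave for every β with 0 < β ≤ α/L². -/
open Real

/-- A constant-speed geodesic parametrized by `[0,1]`. -/
def IsGeodesic {M : Type*} [MetricSpace M] (γ : ℝ → M) : Prop :=
  ∀ s ∈ Set.Icc (0:ℝ) 1, ∀ t ∈ Set.Icc (0:ℝ) 1,
    dist (γ s) (γ t) = |t - s| * dist (γ 0) (γ 1)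

/-- A geodesic metric space: any two points are joined by a geodesic. -/
def GeodesicSpace (M : Type*) [MetricSpace M] : Prop :=
  ∀ x y : M, ∃ γ : ℝ → M, IsGeodesic γ ∧ γ 0 = x ∧ γ 1 = y

/-- Geodesic convexity of a function. -/
def GeodesicallyConvex {M : Type*} [MetricSpace M] (f : M → ℝ) : Prop :=
  ∀ γ : ℝ → M, IsGeodesic γ → ConvexOn ℝ (Set.Icc (0:ℝ) 1) (fun t => f (γ t))

/-- Geodesic concavity of a function. -/
def GeodesicallyConcave {M : Type*} [MetricSpace M] (f : M → ℝ) : Prop :=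
  GeodesicallyConvex (fun x => -f x)

/-- Geodesic `α`-convexity of a function. -/
def GeodesicallyAlphaConvex {M : Type*} [MetricSpace M] (α : ℝ) (f : M → ℝ) : Prop :=
  ∀ γ : ℝ → M, IsGeodesic γ →
    ConvexOn ℝ (Set.Icc (0:ℝ) 1) (fun t => f (γ t) - α / 2 * (dist (γ 0) (γ t))^2)


/-- Continuous + midpoint-convex on `[0,1]` implies convex on `[0,1]`. -/
lemma convexOn_of_midpoint_aux {k : ℝ → ℝ} (hc : ContinuousOn k (Set.Icc (0:ℝ) 1))
    (hm : ∀ u ∈ Set.Icc (0:ℝ) 1, ∀ v ∈ Set.Icc (0:ℝ) 1, k ((u+v)/2) ≤ (k u + k v)/2) :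
    ConvexOn ℝ (Set.Icc (0:ℝ) 1) k := by
  refine ⟨convex_Icc 0 1, ?_⟩
  intro x hx y hy a b ha hb hab
  set g : ℝ → ℝ := fun t => k ((1-t)*x + t*y) - ((1-t)*k x + t*k y) with hgdef
  have hmem : ∀ t ∈ Set.Icc (0:ℝ) 1, (1-t)*x + t*y ∈ Set.Icc (0:ℝ) 1 := by
    intro t ht
    have := (convex_Icc (0:ℝ) 1) hx hy (show (0:ℝ) ≤ 1 - t by linarith [ht.2]) ht.1 (by ring)
    simpa [smul_eq_mul] using this
  have hgc : ContinuousOn g (Set.Icc (0:ℝ) 1) := by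
    have haff : ContinuousOn (fun t : ℝ => (1-t)*x + t*y) (Set.Icc (0:ℝ) 1) :=
      (Continuous.continuousOn (by continuity))
    exact (hc.comp haff hmem).sub (Continuous.continuousOn (by continuity))
  have hgm : ∀ u ∈ Set.Icc (0:ℝ) 1, ∀ v ∈ Set.Icc (0:ℝ) 1, g ((u+v)/2) ≤ (g u + g v)/2 := by
    intro u hu v hv
    have := hm _ (hmem u hu) _ (hmem v hv)
    have harg : ((1-u)*x + u*y + ((1-v)*x + v*y))/2 = (1-(u+v)/2)*x + ((u+v)/2)*y := by ring
    rw [harg] at this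
    simp only [hgdef]
    linarith [this]
  have hkey : ∀ t ∈ Set.Icc (0:ℝ) 1, g t ≤ 0 := by
    by_contra hcon
    push_neg at hcon
    obtain ⟨t₀, ht₀, ht₀pos⟩ := hcon
    obtain ⟨c, hcmem, hcmax⟩ := isCompact_Icc.exists_isMaxOn (Set.nonempty_Icc.2 zero_le_one) hgc
    set M := g c with hM
    have hMpos : 0 < M := lt_of_lt_of_le ht₀pos (hcmax ht₀)
    set T : Set ℝ := {t ∈ Set.Icc (0:ℝ) 1 | g t = M} with hT
    have hTne : T.Nonempty := ⟨c, hcmem, rfl⟩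
    have hTclosed : IsClosed T := by
      have := hgc.preimage_isClosed_of_isClosed isClosed_Icc (isClosed_singleton (x := M))
      convert this using 1
      rfl
    have hTbdd : BddBelow T := ⟨0, fun t ht => ht.1.1⟩
    set t₁ := sInf T with ht₁
    have ht₁T : t₁ ∈ T := hTclosed.csInf_mem hTne hTbdd
    have ht₁mem : t₁ ∈ Set.Icc (0:ℝ) 1 := ht₁T.1
    have ht₁val : g t₁ = M := ht₁T.2
    have hg0 : g 0 = 0 := by simp [hgdef]
    have hg1 : g 1 = 0 := by simp [hgdef]
    have ht₁pos : 0 < t₁ := by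
      rcases lt_or_eq_of_le ht₁mem.1 with h | h
      · exact h
      · rw [← h] at ht₁val; rw [hg0] at ht₁val; linarith
    have ht₁lt : t₁ < 1 := by
      rcases lt_or_eq_of_le ht₁mem.2 with h | h
      · exact h
      · rw [h] at ht₁val; rw [hg1] at ht₁val; linarith
    set δ := min t₁ (1 - t₁) with hδ
    have hδpos : 0 < δ := lt_min ht₁pos (by linarith)
    have hu : t₁ - δ ∈ Set.Icc (0:ℝ) 1 := by
      constructor
      · have : δ ≤ t₁ := min_le_left _ _
        linarith
      · linarith [ht₁mem.2, hδpos]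
    have hv : t₁ + δ ∈ Set.Icc (0:ℝ) 1 := by
      constructor
      · linarith [ht₁mem.1, hδpos]
      · have : δ ≤ 1 - t₁ := min_le_right _ _
        linarith
    have hguM : g (t₁ - δ) < M := by
      rcases lt_or_eq_of_le (show g (t₁ - δ) ≤ M from hcmax hu) with h | h
      · exact h
      · exfalso
        have hmemT : t₁ - δ ∈ T := ⟨hu, h⟩
        have : t₁ ≤ t₁ - δ := csInf_le hTbdd hmemT
        linarith
    have hgvM : g (t₁ + δ) ≤ M := hcmax hv
    have hmid := hgm _ hu _ hv
    have harg : (t₁ - δ + (t₁ + δ))/2 = t₁ := by ring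
    rw [harg] at hmid
    rw [ht₁val] at hmid
    clear_value M T t₁ δ
    clear_value g
    linarith [hmid, hguM, hgvM]
  have hb1 := hkey b ⟨hb, by linarith⟩
  simp only [hgdef] at hb1
  have hab' : 1 - b = a := by linarith
  rw [hab'] at hb1
  simp only [smul_eq_mul]
  linarith

/-- `(e^p + e^q)/2 ≤ e^{(p+q)/2 + (p-q)²/8}`. -/
lemma exp_avg_le_aux (p q : ℝ) :
    (Real.exp p + Real.exp q)/2 ≤ Real.exp ((p+q)/2 + (p-q)^2/8) := by
  have hc := Real.cosh_le_exp_half_sq ((p-q)/2)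
  have e1 : Real.exp p = Real.exp ((p+q)/2) * Real.exp ((p-q)/2) := by
    rw [← Real.exp_add]; congr 1; ring
  have e2 : Real.exp q = Real.exp ((p+q)/2) * Real.exp (-((p-q)/2)) := by
    rw [← Real.exp_add]; congr 1; ring
  calc (Real.exp p + Real.exp q)/2
      = Real.exp ((p+q)/2) * Real.cosh ((p-q)/2) := by
        rw [e1, e2, Real.cosh_eq]; ring
    _ ≤ Real.exp ((p+q)/2) * Real.exp (((p-q)/2)^2/2) :=
        mul_le_mul_of_nonneg_left hc (Real.exp_pos _).le
    _ = Real.exp ((p+q)/2 + (p-q)^2/8) := by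
        rw [← Real.exp_add]; congr 1; ring

/-- A geodesically `α`-convex, `L`-Lipschitz function on a complete geodesic space is
geodesically `β`-expconcave for every `0 < β ≤ α / L²`. -/
theorem strongConvex_lipschitz_implies_expconcave
    {M : Type*} [MetricSpace M] [CompleteSpace M] (hM : GeodesicSpace M)
    (f : M → ℝ) (α L : ℝ) (hα : 0 < α) (hL : 0 < L)
    (hconv : GeodesicallyAlphaConvex α f)
    (hlip : ∀ x y : M, |f x - f y| ≤ L * dist x y) :
    ∀ β : ℝ, 0 < β → β ≤ α / L^2 →
      GeodesicallyConcave (fun x => Real.exp (-β * f x)) := by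
  intro β hβ hβle γ hγ
  have h01 : (0:ℝ) ∈ Set.Icc (0:ℝ) 1 := ⟨le_refl 0, zero_le_one⟩
  set D := dist (γ 0) (γ 1) with hD
  have hDnn : 0 ≤ D := dist_nonneg
  have hdist0 : ∀ t ∈ Set.Icc (0:ℝ) 1, dist (γ 0) (γ t) = t * D := by
    intro t ht
    rw [hγ 0 h01 t ht, sub_zero, abs_of_nonneg ht.1]
  have hγc : ContinuousOn γ (Set.Icc (0:ℝ) 1) := by
    refine LipschitzOnWith.continuousOn (K := Real.toNNReal D)
      (LipschitzOnWith.of_dist_le_mul ?_)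
    intro s hs t ht
    rw [hγ s hs t ht, Real.coe_toNNReal D hDnn, Real.dist_eq, abs_sub_comm]
    rw [mul_comm]
  have hfc : Continuous f := by
    have : LipschitzWith (Real.toNNReal L) f := LipschitzWith.of_dist_le_mul (fun x y => by
      rw [Real.dist_eq, Real.coe_toNNReal L hL.le]
      exact hlip x y)
    exact this.continuous
  have hkc : ContinuousOn (fun t => -Real.exp (-β * f (γ t))) (Set.Icc (0:ℝ) 1) := by
    have h1 : Continuous (fun x : M => -Real.exp (-β * f x)) :=
      (Real.continuous_exp.comp (continuous_const.mul hfc)).neg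
    exact h1.comp_continuousOn hγc
  have hβL : β * L^2 ≤ α := (le_div_iff₀ (by positivity)).mp hβle
  show ConvexOn ℝ (Set.Icc (0:ℝ) 1) (fun t => -Real.exp (-β * f (γ t)))
  apply convexOn_of_midpoint_aux hkc
  intro u hu v hv
  have hmemuv : (u+v)/2 ∈ Set.Icc (0:ℝ) 1 :=
    ⟨by linarith [hu.1, hv.1], by linarith [hu.2, hv.2]⟩
  have hF := (hconv γ hγ).2 hu hv (by norm_num : (0:ℝ) ≤ 1/2)
    (by norm_num : (0:ℝ) ≤ 1/2) (by norm_num)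
  simp only [smul_eq_mul] at hF
  have hmidarg : (1/2 : ℝ) * u + (1/2 : ℝ) * v = (u+v)/2 := by ring
  rw [hmidarg] at hF
  rw [hdist0 u hu, hdist0 v hv, hdist0 _ hmemuv] at hF
  show -Real.exp (-β * f (γ ((u+v)/2)))
      ≤ (-Real.exp (-β * f (γ u)) + -Real.exp (-β * f (γ v)))/2
  set gu := f (γ u) with hgu
  set gv := f (γ v) with hgv
  set gm := f (γ ((u+v)/2)) with hgm
  clear_value gu gv gm
  have hg : gm ≤ (gu + gv)/2 - α * D^2 * (u - v)^2 / 8 := by nlinarith [hF]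
  have hLip : |gu - gv| ≤ L * (|v - u| * D) := by
    have h := hlip (γ u) (γ v)
    rw [hγ u hu v hv, ← hD, ← hgu, ← hgv] at h
    exact h
  have hsq : (gu - gv)^2 ≤ L^2 * (u - v)^2 * D^2 := by
    have hmm := mul_self_le_mul_self (abs_nonneg (gu - gv)) hLip
    calc (gu - gv)^2 = |gu - gv| * |gu - gv| := by rw [abs_mul_abs_self]; ring
      _ ≤ (L*(|v - u| * D)) * (L*(|v - u| * D)) := hmm
      _ = L^2 * (u - v)^2 * D^2 := by
          rw [show (L*(|v - u| * D))*(L*(|v - u| * D)) = L^2 * (|v - u| * |v - u|) * D^2 by ring,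
            abs_mul_abs_self]
          ring
  have hstep : (Real.exp (-β*gu) + Real.exp (-β*gv))/2 ≤ Real.exp (-β*gm) := by
    refine le_trans (exp_avg_le_aux _ _) ?_
    apply Real.exp_le_exp.mpr
    have h2 : β^2 * (gu - gv)^2 ≤ β^2 * (L^2 * (u-v)^2 * D^2) :=
      mul_le_mul_of_nonneg_left hsq (sq_nonneg β)
    have h3 : β^2 * L^2 ≤ β * α := by nlinarith [hβL, hβ.le]
    have h4 : β^2 * (L^2*(u-v)^2*D^2) ≤ β*α*((u-v)^2*D^2) := by
      nlinarith [h3, mul_nonneg (sq_nonneg (u-v)) (sq_nonneg D)]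
    have h5 : β * gm ≤ β*((gu+gv)/2 - α*D^2*(u-v)^2/8) :=
      mul_le_mul_of_nonneg_left hg hβ.le
    linarith [h2, h4, h5]
  linarith [hstep]
end

section
/- For all r ≥ 0 and all ε ∈ (0, 1/2], sinh(εr) ≥ ε·ψ(r)·sinh(r), where ψ(r) := (r·coth r)·exp(-r·coth r) for r > 0 and ψ(0) := e^{-1}. -/
open Real

/-- `ψ(r) = (r coth r) exp(-(r coth r))` for `r > 0`, extended by `ψ(0) = e⁻¹`. -/
noncomputable def psi (r : ℝ) : ℝ :=
  if r = 0 then Real.exp (-1)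
  else (r * Real.cosh r / Real.sinh r) * Real.exp (-(r * Real.cosh r / Real.sinh r))

/-- For all `r ≥ 0` and `ε ∈ (0, 1/2]`, `sinh (ε r) ≥ ε ψ(r) sinh r`. -/
theorem sinh_scaling_lower_bound (r ε : ℝ) (hr : 0 ≤ r) (hε : ε ∈ Set.Ioc (0:ℝ) (1/2)) :
    Real.sinh (ε * r) ≥ ε * psi r * Real.sinh r := by
  obtain ⟨hε0, hε2⟩ := hε
  rcases eq_or_lt_of_le hr with h0 | hr0
  · simp [psi, ← h0]
  · have hs : 0 < Real.sinh r := Real.sinh_pos_iff.2 hr0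
    have hc : 0 < Real.cosh r := Real.cosh_pos r
    set f : ℝ := r * Real.cosh r / Real.sinh r with hf
    have hpsi : psi r = f * Real.exp (-f) := by simp [psi, ne_of_gt hr0, hf]
    have hrhs : ε * psi r * Real.sinh r = ε * r * (Real.cosh r * Real.exp (-f)) := by
      rw [hpsi]; field_simp [hf]; ring
      rw [hf, div_mul_cancel₀ _ hs.ne']
    rw [hrhs]
    have hfr : r ≤ f := by
      rw [hf, le_div_iff₀ hs]
      have : Real.sinh r ≤ Real.cosh r := by
        nlinarith [Real.cosh_sq r, Real.sinh_sq r, abs_nonneg (Real.sinh r),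
          sq_abs (Real.sinh r)]
      nlinarith
    have hce : Real.cosh r ≤ Real.exp r := by
      rw [Real.cosh_eq]
      have : Real.exp (-r) ≤ Real.exp r := Real.exp_le_exp.2 (by linarith)
      linarith
    have h1 : Real.cosh r * Real.exp (-f) ≤ 1 := by
      calc Real.cosh r * Real.exp (-f) ≤ Real.exp r * Real.exp (-r) := by
            apply mul_le_mul hce (Real.exp_le_exp.2 (by linarith)) (Real.exp_pos _).le
              (Real.exp_pos _).le
        _ = 1 := by rw [← Real.exp_add]; simp
    have h2 : ε * r * (Real.cosh r * Real.exp (-f)) ≤ ε * r := by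
      nlinarith [mul_pos hε0 hr0, Real.cosh_pos r, Real.exp_pos (-f)]
    have h3 : ε * r ≤ Real.sinh (ε * r) :=
      Real.self_le_sinh_iff.2 (mul_pos hε0 hr0).le
    linarith
end

section
/- Let (M,d) be a complete geodesic space with curv(M) ≤ 0 (in the Alexandrov sense, equivalently: d²(p,γ(t)) ≤ (1-t)d²(p,x) + t·d²(p,y) - t(1-t)d²(x,y) for all geodesics γ from x to y and all p). If moreover M has finite diameter D, then for every p ∈ M the function x ↦ d²(p,x) is geodesically β-expconcave for every β with 0 < β ≤ 1/(2D²). -/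
open Real

/-- A continuous midpoint-convex function on `[0,1]` is convex. -/
lemma midpoint_convexOn_Icc {f : ℝ → ℝ} (hc : ContinuousOn f (Set.Icc 0 1))
    (hm : ∀ u ∈ Set.Icc (0:ℝ) 1, ∀ v ∈ Set.Icc (0:ℝ) 1,
      f ((u + v) / 2) ≤ (f u + f v) / 2) :
    ConvexOn ℝ (Set.Icc (0:ℝ) 1) f := by
  have key : ∀ x ∈ Set.Icc (0:ℝ) 1, ∀ y ∈ Set.Icc (0:ℝ) 1, x < y →
      ∀ t ∈ Set.Icc x y, (y - x) * f t ≤ (y - t) * f x + (t - x) * f y := by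
    intro x hx y hy hxy t ht
    set ℓ : ℝ → ℝ := fun s => ((y - s) * f x + (s - x) * f y) / (y - x) with hℓ
    have hyx : (0:ℝ) < y - x := by linarith
    set g : ℝ → ℝ := fun s => f s - ℓ s with hg
    have hsub : Set.Icc x y ⊆ Set.Icc (0:ℝ) 1 := Set.Icc_subset_Icc hx.1 hy.2
    have hgc : ContinuousOn g (Set.Icc x y) := by
      apply ContinuousOn.sub (hc.mono hsub)
      apply Continuous.continuousOn
      fun_prop
    obtain ⟨w, hw, hwmax⟩ := isCompact_Icc.exists_isMaxOn ⟨x, Set.left_mem_Icc.2 hxy.le⟩ hgc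
    have hgx : g x = 0 := by
      simp only [hg, hℓ]
      field_simp
      ring
    have hgy : g y = 0 := by
      simp only [hg, hℓ]
      field_simp
      ring
    have hgw : g w ≤ 0 := by
      by_contra hpos
      push_neg at hpos
      have hwx : x < w := lt_of_le_of_ne hw.1 (by rintro rfl; linarith)
      have hwy : w < y := lt_of_le_of_ne hw.2 (by rintro rfl; linarith)
      set h : ℝ := min (w - x) (y - w) with hh
      have hh0 : 0 < h := lt_min (by linarith) (by linarith)
      have hle1 : h ≤ w - x := min_le_left _ _
      have hle2 : h ≤ y - w := min_le_right _ _
      have hmem1 : w - h ∈ Set.Icc x y := ⟨by linarith, by linarith⟩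
      have hmem2 : w + h ∈ Set.Icc x y := ⟨by linarith, by linarith⟩
      have hmid : f w ≤ (f (w - h) + f (w + h)) / 2 := by
        have := hm (w - h) (hsub hmem1) (w + h) (hsub hmem2)
        have e : (w - h + (w + h)) / 2 = w := by ring
        rwa [e] at this
      have hℓmid : ℓ w = (ℓ (w - h) + ℓ (w + h)) / 2 := by
        simp only [hℓ]; field_simp; ring
      have hgmid : g w ≤ (g (w - h) + g (w + h)) / 2 := by
        simp only [hg]; rw [hℓmid]; linarith
      have h1 : g (w - h) ≤ g w := hwmax hmem1
      have h2 : g (w + h) ≤ g w := hwmax hmem2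
      rcases min_cases (w - x) (y - w) with ⟨he, _⟩ | ⟨he, _⟩
      · have hwh : w - h = x := by rw [hh, he]; ring
        rw [hwh, hgx] at hgmid
        clear_value g h
        linarith
      · have hwh : w + h = y := by rw [hh, he]; ring
        rw [hwh, hgy] at hgmid
        clear_value g h
        linarith
    have hgt : g t ≤ 0 := le_trans (hwmax ht) hgw
    have hft : f t ≤ ℓ t := by simp only [hg] at hgt; linarith
    have h6 : (y - x) * f t ≤ (y - x) * ℓ t :=
      mul_le_mul_of_nonneg_left hft hyx.le
    calc (y - x) * f t ≤ (y - x) * ℓ t := h6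
      _ = (y - t) * f x + (t - x) * f y := by
          simp only [hℓ]; field_simp
  refine ⟨convex_Icc 0 1, ?_⟩
  intro x hx y hy a b ha hb hab
  obtain rfl : b = 1 - a := by linarith
  have ha1 : a ≤ 1 := by linarith
  simp only [smul_eq_mul]
  rcases lt_trichotomy x y with hxy | rfl | hyx
  · have hmem : a * x + (1 - a) * y ∈ Set.Icc x y := by
      constructor <;> nlinarith
    have hk := key x hx y hy hxy _ hmem
    have e1 : y - (a * x + (1 - a) * y) = a * (y - x) := by ring
    have e2 : (a * x + (1 - a) * y) - x = (1 - a) * (y - x) := by ring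
    rw [e1, e2] at hk
    have hyx : (0:ℝ) < y - x := by linarith
    have h5 : (y - x) * (a * f x + (1 - a) * f y)
        = a * (y - x) * f x + (1 - a) * (y - x) * f y := by ring
    have h6 : (y - x) * f (a * x + (1 - a) * y) ≤ (y - x) * (a * f x + (1 - a) * f y) := by
      rw [h5]; exact hk
    exact (mul_le_mul_iff_right₀ hyx).mp h6
  · have e : a * x + (1 - a) * x = x := by ring
    rw [e]
    have : a * f x + (1 - a) * f x = f x := by ring
    rw [this]
  · have hmem : a * x + (1 - a) * y ∈ Set.Icc y x := by
      constructor <;> nlinarith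
    have hk := key y hy x hx hyx _ hmem
    have e1 : x - (a * x + (1 - a) * y) = (1 - a) * (x - y) := by ring
    have e2 : (a * x + (1 - a) * y) - y = a * (x - y) := by ring
    rw [e1, e2] at hk
    have hxy : (0:ℝ) < x - y := by linarith
    have h5 : (x - y) * (a * f x + (1 - a) * f y)
        = (1 - a) * (x - y) * f y + a * (x - y) * f x := by ring
    have h6 : (x - y) * f (a * x + (1 - a) * y) ≤ (x - y) * (a * f x + (1 - a) * f y) := by
      rw [h5]; exact hk
    exact (mul_le_mul_iff_right₀ hxy).mp h6

set_option maxHeartbeats 1600000 in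
/-- On a complete geodesic space of nonpositive curvature with diameter at most `D`,
the squared distance `x ↦ d²(p,x)` is geodesically `β`-expconcave for `0 < β ≤ 1/(2D²)`. -/
theorem sq_dist_expconcave_of_nonpos_curv
    {M : Type*} [MetricSpace M] [CompleteSpace M] (hgeo : GeodesicSpace M)
    -- curv(M) ≤ 0, in comparison form
    (hcurv : ∀ (p : M) (γ : ℝ → M), IsGeodesic γ → ∀ t ∈ Set.Icc (0:ℝ) 1,
      dist p (γ t) ^ 2 ≤ (1 - t) * dist p (γ 0) ^ 2 + t * dist p (γ 1) ^ 2
        - t * (1 - t) * dist (γ 0) (γ 1) ^ 2)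
    (D : ℝ) (hD : 0 < D) (hdiam : ∀ x y : M, dist x y ≤ D) :
    ∀ (p : M) (β : ℝ), 0 < β → β ≤ 1 / (2 * D ^ 2) →
      GeodesicallyConcave (fun x => Real.exp (-β * dist p x ^ 2)) := by
  intro p β hβ hβle γ hγ
  have hβD2 : 2 * β * D ^ 2 ≤ 1 := by
    rw [le_div_iff₀ (by positivity)] at hβle
    linarith
  -- continuity of γ on [0,1]
  have hγc : ContinuousOn γ (Set.Icc 0 1) := by
    have hlip : LipschitzOnWith (Real.toNNReal (dist (γ 0) (γ 1))) γ (Set.Icc 0 1) := by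
      rw [lipschitzOnWith_iff_dist_le_mul]
      intro s hs t ht
      refine le_of_eq ?_
      rw [hγ s hs t ht, Real.coe_toNNReal _ dist_nonneg, Real.dist_eq,
        abs_sub_comm s t, mul_comm]
    exact hlip.continuousOn
  have hcont : ContinuousOn (fun t => -Real.exp (-β * dist p (γ t) ^ 2)) (Set.Icc (0:ℝ) 1) := by
    have houter : Continuous fun x : M => -Real.exp (-β * dist p x ^ 2) := by fun_prop
    exact houter.comp_continuousOn hγc
  show ConvexOn ℝ (Set.Icc (0:ℝ) 1) fun t => -Real.exp (-β * dist p (γ t) ^ 2)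
  apply midpoint_convexOn_Icc hcont
  intro u hu v hv
  -- reparametrized geodesic from γ u to γ v
  have hmem : ∀ r ∈ Set.Icc (0:ℝ) 1, u + r * (v - u) ∈ Set.Icc (0:ℝ) 1 := by
    intro r hr
    constructor <;> nlinarith [hu.1, hu.2, hv.1, hv.2, hr.1, hr.2]
  have hγ' : IsGeodesic (fun w => γ (u + w * (v - u))) := by
    intro s hs t ht
    simp only
    rw [hγ _ (hmem s hs) _ (hmem t ht), hγ _ (hmem 0 (by norm_num)) _ (hmem 1 (by norm_num))]
    rw [show u + t * (v - u) - (u + s * (v - u)) = (t - s) * (v - u) from by ring,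
      show u + 1 * (v - u) - (u + 0 * (v - u)) = v - u from by ring, abs_mul]
    ring
  have hc2 := hcurv p _ hγ' (1/2) (by norm_num)
  simp only [show u + 1/2 * (v - u) = (u + v) / 2 from by ring,
    show u + 0 * (v - u) = u from by ring,
    show u + 1 * (v - u) = v from by ring] at hc2
  -- abbreviations
  set A := dist p (γ u) with hA
  set B := dist p (γ v) with hB
  set E := dist (γ u) (γ v) with hE
  set G := dist p (γ ((u + v) / 2)) with hG
  have hc3 : G ^ 2 ≤ (1/2) * A ^ 2 + (1/2) * B ^ 2 - (1/4) * E ^ 2 := by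
    have : (1 - 1/2 : ℝ) = 1/2 := by norm_num
    linarith [hc2]
  have hAD : A ≤ D := hdiam _ _
  have hBD : B ≤ D := hdiam _ _
  have hED : E ≤ D := hdiam _ _
  have hA0 : 0 ≤ A := dist_nonneg
  have hB0 : 0 ≤ B := dist_nonneg
  have hE0 : 0 ≤ E := dist_nonneg
  have habs : |A - B| ≤ E := by
    have := abs_dist_sub_le (γ u) (γ v) p
    rwa [dist_comm (γ u) p, dist_comm (γ v) p] at this
  clear_value A B E G
  have h1 : (A - B) ^ 2 ≤ E ^ 2 := by
    obtain ⟨ha, hb⟩ := abs_le.mp habs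
    nlinarith
  have hsq : (A ^ 2 - B ^ 2) ^ 2 ≤ 4 * D ^ 2 * E ^ 2 := by
    have h2 : (A + B) ^ 2 ≤ (2 * D) ^ 2 := by nlinarith
    have h3 : (A ^ 2 - B ^ 2) ^ 2 = (A + B) ^ 2 * (A - B) ^ 2 := by ring
    nlinarith [mul_le_mul h2 h1 (sq_nonneg _) (sq_nonneg _)]
  -- key exponent inequality
  have key2 : (β * (A ^ 2 - B ^ 2) / 2) ^ 2 / 2 ≤ β * E ^ 2 / 4 := by
    have t1 : β ^ 2 * (A ^ 2 - B ^ 2) ^ 2 ≤ β ^ 2 * (4 * D ^ 2 * E ^ 2) :=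
      mul_le_mul_of_nonneg_left hsq (sq_nonneg β)
    have t2 : (2 * β * D ^ 2) * (2 * β * E ^ 2) ≤ 1 * (2 * β * E ^ 2) :=
      mul_le_mul_of_nonneg_right hβD2 (by positivity)
    nlinarith
  have key3 : Real.cosh (β * (A ^ 2 - B ^ 2) / 2) ≤ Real.exp (β * E ^ 2 / 4) :=
    le_trans (Real.cosh_le_exp_half_sq _) (Real.exp_le_exp.2 key2)
  have expand : (Real.exp (-β * A ^ 2) + Real.exp (-β * B ^ 2)) / 2
      = Real.exp (-β * (A ^ 2 + B ^ 2) / 2) * Real.cosh (β * (A ^ 2 - B ^ 2) / 2) := by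
    have e : Real.exp (-β * (A ^ 2 + B ^ 2) / 2) * Real.cosh (β * (A ^ 2 - B ^ 2) / 2)
        = (Real.exp (-β * (A ^ 2 + B ^ 2) / 2 + β * (A ^ 2 - B ^ 2) / 2)
          + Real.exp (-β * (A ^ 2 + B ^ 2) / 2 + -(β * (A ^ 2 - B ^ 2) / 2))) / 2 := by
      rw [Real.cosh_eq, Real.exp_add, Real.exp_add]; ring
    rw [e, show -β * (A ^ 2 + B ^ 2) / 2 + β * (A ^ 2 - B ^ 2) / 2 = -β * B ^ 2 from by ring,
      show -β * (A ^ 2 + B ^ 2) / 2 + -(β * (A ^ 2 - B ^ 2) / 2) = -β * A ^ 2 from by ring]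
    ring
  have key1 : -β * (A ^ 2 + B ^ 2) / 2 + β * E ^ 2 / 4 ≤ -β * G ^ 2 := by
    nlinarith [mul_le_mul_of_nonneg_left hc3 hβ.le]
  have final : (Real.exp (-β * A ^ 2) + Real.exp (-β * B ^ 2)) / 2 ≤ Real.exp (-β * G ^ 2) := by
    rw [expand]
    calc Real.exp (-β * (A ^ 2 + B ^ 2) / 2) * Real.cosh (β * (A ^ 2 - B ^ 2) / 2)
        ≤ Real.exp (-β * (A ^ 2 + B ^ 2) / 2) * Real.exp (β * E ^ 2 / 4) :=
          mul_le_mul_of_nonneg_left key3 (Real.exp_nonneg _)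
      _ = Real.exp (-β * (A ^ 2 + B ^ 2) / 2 + β * E ^ 2 / 4) := (Real.exp_add _ _).symm
      _ ≤ Real.exp (-β * G ^ 2) := Real.exp_le_exp.2 key1
  linarith
end

section
/- (Regret bound for Lipschitz expconcave losses under a ball-measure lower bound) Assume barycenters exist, Jensen's inequality holds for geodesically convex functions at barycenters, m(B(x,r)) ≥ c(x)r^p for all x and r ∈ (0, r_0], and every loss ℓ_t is geodesically β-expconcave and L-Lipschitz. Then the EWB forecaster with constant parameter β has regret R_n ≤ L + (1/β)ln(1/c(x*_n)) + (p ln n)/β for all n ≥ 1/r_0, where x*_n minimizes Σ_{t=1}^n ℓ_t. -/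
open Real MeasureTheory

/-- Regret bound for the EWB forecaster with geodesically `β`-expconcave `L`-Lipschitz
losses, under the ball-measure lower bound `m(B(x,r)) ≥ c(x) r^p`:
`R_n ≤ L + (1/β) ln(1/c(x*_n)) + (p ln n)/β` for all `n ≥ 1/r₀`. -/
theorem ewb_regret_lipschitz_expconcave
    {M : Type*} [MetricSpace M] [MeasurableSpace M] [BorelSpace M]
    (hgeo : GeodesicSpace M)
    (m : Measure M) [IsProbabilityMeasure m]
    (β L p r₀ : ℝ) (hβ : 0 < β) (hLpos : 0 < L) (hp : 0 < p) (hr₀ : 0 < r₀)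
    (c : M → ℝ) (hc : ∀ x, 0 < c x)
    -- ball-measure lower bound
    (hball : ∀ (x : M), ∀ r ∈ Set.Ioc (0:ℝ) r₀,
      c x * r ^ p ≤ (m (Metric.ball x r)).toReal)
    -- the losses: geodesically β-expconcave and L-Lipschitz
    (ℓ : ℕ → M → ℝ) (hmeas : ∀ t, Measurable (ℓ t))
    (hexp : ∀ t, GeodesicallyConcave (fun x => Real.exp (-β * ℓ t x)))
    (hlip : ∀ t (x y : M), |ℓ t x - ℓ t y| ≤ L * dist x y)
    -- the exponential-weights measures: m₁ = m, dm_{t+1} ∝ e^{-β ℓ_t} dm_t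
    (μ : ℕ → Measure M) (hprob : ∀ t, IsProbabilityMeasure (μ t))
    (hμ1 : μ 1 = m)
    (hrec : ∀ t, 1 ≤ t → μ (t + 1) = (μ t).withDensity
      (fun x => ENNReal.ofReal
        (Real.exp (-β * ℓ t x) / ∫ y, Real.exp (-β * ℓ t y) ∂(μ t))))
    -- integrability assumptions
    (hint : ∀ t, Integrable (fun x => Real.exp (-β * ℓ t x)) (μ t))
    (hintℓ : ∀ t s, Integrable (ℓ t) (μ s))
    (hintm : ∀ t, Integrable (ℓ t) m)
    -- the EWB forecaster: x t is a barycenter of μ t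
    (x : ℕ → M)
    (hx : ∀ t y, (∫ z, dist (x t) z ^ 2 ∂(μ t)) ≤ ∫ z, dist y z ^ 2 ∂(μ t))
    -- Jensen's inequality at barycenters for geodesically convex functions
    (hjensen : ∀ (t : ℕ) (f : M → ℝ), GeodesicallyConvex f → Integrable f (μ t) →
      f (x t) ≤ ∫ y, f y ∂(μ t))
    -- horizon and the best point in hindsight
    (n : ℕ) (hn : (1:ℝ) / r₀ ≤ n)
    (xstar : M) (hxstar : ∀ y : M,
      (∑ t ∈ Finset.Icc 1 n, ℓ t xstar) ≤ ∑ t ∈ Finset.Icc 1 n, ℓ t y) :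
    (∑ t ∈ Finset.Icc 1 n, ℓ t (x t)) - (∑ t ∈ Finset.Icc 1 n, ℓ t xstar)
      ≤ L + (1 / β) * Real.log (1 / c xstar) + p * Real.log n / β := by
  classical
  have hβ' : β ≠ 0 := hβ.ne'
  have hn0 : 0 < (n:ℝ) := lt_of_lt_of_le (by positivity) hn
  have hn1 : 1 ≤ n := by exact_mod_cast Nat.one_le_iff_ne_zero.mpr (by
    intro h; rw [h] at hn0; simp at hn0)
  set Z : ℕ → ℝ := fun t => ∫ y, Real.exp (-β * ℓ t y) ∂(μ t) with hZdef
  have Zpos : ∀ t, 0 < Z t := by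
    intro t
    have hsupp : Function.support (fun y => Real.exp (-β * ℓ t y)) = Set.univ := by
      ext y; simp [Function.support, (Real.exp_pos (-β * ℓ t y)).ne']
    rw [hZdef]
    rw [MeasureTheory.integral_pos_iff_support_of_nonneg
      (fun y => (Real.exp_pos _).le) (hint t), hsupp]
    simp
  -- Step 1: per-round inequality
  have step1 : ∀ t, ℓ t (x t) ≤ -(1/β) * Real.log (Z t) := by
    intro t
    have hj := hjensen t (fun y => -(Real.exp (-β * ℓ t y))) (hexp t) ((hint t).neg)
    rw [MeasureTheory.integral_neg] at hj
    have hZle : Z t ≤ Real.exp (-β * ℓ t (x t)) := by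
      rw [hZdef]; linarith
    have hlog : Real.log (Z t) ≤ -β * ℓ t (x t) := by
      calc Real.log (Z t) ≤ Real.log (Real.exp (-β * ℓ t (x t))) :=
            Real.log_le_log (Zpos t) hZle
        _ = -β * ℓ t (x t) := Real.log_exp _
    have h2 : (1/β) * Real.log (Z t) ≤ (1/β) * (-β * ℓ t (x t)) :=
      mul_le_mul_of_nonneg_left hlog (by positivity)
    have h3 : (1/β) * (-β * ℓ t (x t)) = -(ℓ t (x t)) := by field_simp
    linarith
  -- measurability of densities
  have meas_d : ∀ t, Measurable (fun y =>
      ENNReal.ofReal (Real.exp (-β * ℓ t y) / Z t)) := by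
    intro t
    exact ((((hmeas t).const_mul (-β)).exp).div_const (Z t)).ennreal_ofReal
  have hd : ∀ t y, ENNReal.ofReal (Real.exp (-β * ℓ t y) / Z t) * ENNReal.ofReal (Z t)
      = ENNReal.ofReal (Real.exp (-β * ℓ t y)) := by
    intro t y
    rw [← ENNReal.ofReal_mul (div_nonneg (Real.exp_pos _).le (Zpos t).le),
      div_mul_cancel₀ _ (Zpos t).ne']
  have hrecZ : ∀ t, 1 ≤ t → μ (t + 1) = (μ t).withDensity
      (fun y => ENNReal.ofReal (Real.exp (-β * ℓ t y) / Z t)) := hrec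
  -- Key telescoping identity
  have key : ∀ k, 1 ≤ k → ∀ g : M → ENNReal, Measurable g →
      (∫⁻ y, g y ∂(μ (k+1))) * ∏ t ∈ Finset.Icc 1 k, ENNReal.ofReal (Z t)
        = ∫⁻ y, g y * ENNReal.ofReal (Real.exp (-β * ∑ t ∈ Finset.Icc 1 k, ℓ t y)) ∂m := by
    intro k hk
    induction k, hk using Nat.le_induction with
    | base =>
      intro g hg
      rw [hrecZ 1 le_rfl,
        MeasureTheory.lintegral_withDensity_eq_lintegral_mul (μ 1) (meas_d 1) hg, hμ1]
      rw [show (Finset.Icc 1 1) = {1} from Finset.Icc_self 1, Finset.prod_singleton]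
      rw [← MeasureTheory.lintegral_mul_const' _ _ ENNReal.ofReal_ne_top]
      congr 1; funext y
      simp only [Pi.mul_apply, Finset.sum_singleton]
      rw [mul_right_comm, hd 1 y, mul_comm]
    | succ k hk IH =>
      intro g hg
      rw [hrecZ (k+1) (by omega)]
      rw [MeasureTheory.lintegral_withDensity_eq_lintegral_mul (μ (k+1)) (meas_d (k+1)) hg]
      simp only [Pi.mul_apply]
      rw [Finset.prod_Icc_succ_top (show (1:ℕ) ≤ k + 1 by omega), ← mul_assoc]
      rw [IH (fun y => ENNReal.ofReal (Real.exp (-β * ℓ (k+1) y) / Z (k+1)) * g y) ((meas_d (k+1)).mul hg)]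
      rw [← MeasureTheory.lintegral_mul_const' _ _ ENNReal.ofReal_ne_top]
      congr 1; funext y
      rw [Finset.sum_Icc_succ_top (by omega : 1 ≤ k + 1)]
      have e2 : ENNReal.ofReal (Real.exp (-β * ℓ (k+1) y))
          * ENNReal.ofReal (Real.exp (-β * ∑ t ∈ Finset.Icc 1 k, ℓ t y))
          = ENNReal.ofReal (Real.exp (-β * ((∑ t ∈ Finset.Icc 1 k, ℓ t y) + ℓ (k+1) y))) := by
        rw [← ENNReal.ofReal_mul (Real.exp_pos _).le, ← Real.exp_add]
        ring_nf
      calc ENNReal.ofReal (Real.exp (-β * ℓ (k+1) y) / Z (k+1)) * g y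
            * ENNReal.ofReal (Real.exp (-β * ∑ t ∈ Finset.Icc 1 k, ℓ t y))
            * ENNReal.ofReal (Z (k+1))
          = (ENNReal.ofReal (Real.exp (-β * ℓ (k+1) y) / Z (k+1)) * ENNReal.ofReal (Z (k+1)))
            * (g y * ENNReal.ofReal (Real.exp (-β * ∑ t ∈ Finset.Icc 1 k, ℓ t y))) := by ring
        _ = g y * (ENNReal.ofReal (Real.exp (-β * ℓ (k+1) y))
            * ENNReal.ofReal (Real.exp (-β * ∑ t ∈ Finset.Icc 1 k, ℓ t y))) := by
            rw [hd (k+1) y]; ring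
        _ = g y * ENNReal.ofReal (Real.exp (-β * ((∑ t ∈ Finset.Icc 1 k, ℓ t y) + ℓ (k+1) y))) := by
            rw [e2]
  -- product identity
  have hA : ∏ t ∈ Finset.Icc 1 n, ENNReal.ofReal (Z t)
      = ∫⁻ y, ENNReal.ofReal (Real.exp (-β * ∑ t ∈ Finset.Icc 1 n, ℓ t y)) ∂m := by
    have := key n hn1 (fun _ => 1) measurable_const
    simpa [MeasureTheory.lintegral_one, (hprob (n+1)).measure_univ] using this
  -- the radius
  set r : ℝ := (n:ℝ)⁻¹ with hrdef
  have hrpos : 0 < r := by positivity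
  have hrIoc : r ∈ Set.Ioc (0:ℝ) r₀ := by
    constructor
    · exact hrpos
    · rw [hrdef, inv_le_comm₀ hn0 hr₀] -- r₀⁻¹ ≤ n
      calc r₀⁻¹ = 1 / r₀ := (one_div r₀).symm
        _ ≤ n := hn
  -- Lipschitz bound on the ball
  have hSball : ∀ y ∈ Metric.ball xstar r,
      (∑ t ∈ Finset.Icc 1 n, ℓ t y) ≤ (∑ t ∈ Finset.Icc 1 n, ℓ t xstar) + L := by
    intro y hy
    have hdist : dist y xstar < r := Metric.mem_ball.mp hy
    have hterm : ∀ t ∈ Finset.Icc 1 n, ℓ t y ≤ ℓ t xstar + L * r := by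
      intro t _
      have h1 := abs_le.mp (hlip t y xstar)
      have h2 : L * dist y xstar ≤ L * r := by
        exact mul_le_mul_of_nonneg_left hdist.le hLpos.le
      linarith [h1.2]
    calc (∑ t ∈ Finset.Icc 1 n, ℓ t y)
        ≤ ∑ t ∈ Finset.Icc 1 n, (ℓ t xstar + L * r) := Finset.sum_le_sum hterm
      _ = (∑ t ∈ Finset.Icc 1 n, ℓ t xstar) + (n : ℝ) * (L * r) := by
          rw [Finset.sum_add_distrib, Finset.sum_const, Nat.card_Icc]
          simp
      _ = (∑ t ∈ Finset.Icc 1 n, ℓ t xstar) + L := by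
          have hrL : (n:ℝ) * (L * r) = L := by
            rw [hrdef]; field_simp
          rw [hrL]
  -- lower bound on the lintegral
  have hmeasS : Measurable (fun y =>
      ENNReal.ofReal (Real.exp (-β * ∑ t ∈ Finset.Icc 1 n, ℓ t y))) := by
    exact (((Finset.measurable_sum _ (fun t _ => hmeas t)).const_mul
      (-β)).exp).ennreal_ofReal
  have hlower : ENNReal.ofReal (Real.exp (-β * ((∑ t ∈ Finset.Icc 1 n, ℓ t xstar) + L)))
      * m (Metric.ball xstar r)
      ≤ ∫⁻ y, ENNReal.ofReal (Real.exp (-β * ∑ t ∈ Finset.Icc 1 n, ℓ t y)) ∂m := by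
    rw [← MeasureTheory.setLIntegral_const (Metric.ball xstar r) _]
    refine le_trans (MeasureTheory.setLIntegral_mono hmeasS ?_)
      (MeasureTheory.setLIntegral_le_lintegral _ _)
    intro y hy
    apply ENNReal.ofReal_le_ofReal
    apply Real.exp_le_exp.mpr
    have := hSball y hy
    nlinarith [hβ]
  have hmball : ENNReal.ofReal (c xstar * r ^ p) ≤ m (Metric.ball xstar r) := by
    calc ENNReal.ofReal (c xstar * r ^ p)
        ≤ ENNReal.ofReal ((m (Metric.ball xstar r)).toReal) :=
          ENNReal.ofReal_le_ofReal (hball xstar r hrIoc)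
      _ = m (Metric.ball xstar r) := ENNReal.ofReal_toReal (measure_ne_top m _)
  -- combine to a real inequality on the product
  have hZprodnn : (0:ℝ) ≤ ∏ t ∈ Finset.Icc 1 n, Z t :=
    Finset.prod_nonneg (fun t _ => (Zpos t).le)
  have hZprod : c xstar * r ^ p * Real.exp (-β * ((∑ t ∈ Finset.Icc 1 n, ℓ t xstar) + L))
      ≤ ∏ t ∈ Finset.Icc 1 n, Z t := by
    rw [← ENNReal.ofReal_le_ofReal_iff hZprodnn,
      ENNReal.ofReal_prod_of_nonneg (fun t _ => (Zpos t).le), hA,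
      ENNReal.ofReal_mul (mul_pos (hc xstar) (Real.rpow_pos_of_pos hrpos p)).le]
    calc ENNReal.ofReal (c xstar * r ^ p)
        * ENNReal.ofReal (Real.exp (-β * ((∑ t ∈ Finset.Icc 1 n, ℓ t xstar) + L)))
        ≤ m (Metric.ball xstar r)
          * ENNReal.ofReal (Real.exp (-β * ((∑ t ∈ Finset.Icc 1 n, ℓ t xstar) + L))) :=
          mul_le_mul_left hmball _
      _ ≤ _ := by rw [mul_comm]; exact hlower
  -- take logs
  have hlogprod : Real.log (c xstar) + p * Real.log r
      + (-β * ((∑ t ∈ Finset.Icc 1 n, ℓ t xstar) + L))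
      ≤ Real.log (∏ t ∈ Finset.Icc 1 n, Z t) := by
    have hposl : (0:ℝ) < c xstar * r ^ p
        * Real.exp (-β * ((∑ t ∈ Finset.Icc 1 n, ℓ t xstar) + L)) := by
      have := hc xstar
      positivity
    calc Real.log (c xstar) + p * Real.log r
          + (-β * ((∑ t ∈ Finset.Icc 1 n, ℓ t xstar) + L))
        = Real.log (c xstar * r ^ p
            * Real.exp (-β * ((∑ t ∈ Finset.Icc 1 n, ℓ t xstar) + L))) := by
          rw [Real.log_mul (mul_pos (hc xstar) (Real.rpow_pos_of_pos hrpos p)).ne'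
              (Real.exp_pos _).ne',
            Real.log_mul (hc xstar).ne' (Real.rpow_pos_of_pos hrpos p).ne',
            Real.log_rpow hrpos, Real.log_exp]
      _ ≤ Real.log (∏ t ∈ Finset.Icc 1 n, Z t) := Real.log_le_log hposl hZprod
  -- sum of per-round inequalities
  have hsum : (∑ t ∈ Finset.Icc 1 n, ℓ t (x t))
      ≤ -(1/β) * Real.log (∏ t ∈ Finset.Icc 1 n, Z t) := by
    rw [Real.log_prod (fun t _ => (Zpos t).ne'), Finset.mul_sum]
    exact Finset.sum_le_sum (fun t _ => step1 t)
  -- final arithmetic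
  have hlogr : Real.log r = -Real.log n := by rw [hrdef, Real.log_inv]
  have hlogc : Real.log (1 / c xstar) = -Real.log (c xstar) := by
    rw [one_div, Real.log_inv]
  rw [hlogc]
  rw [hlogr] at hlogprod
  have hb1 : (1/β) * β = 1 := one_div_mul_cancel hβ'
  have hmono : (1/β) * (Real.log (c xstar) + p * (-Real.log n)
      + (-β * ((∑ t ∈ Finset.Icc 1 n, ℓ t xstar) + L)))
      ≤ (1/β) * Real.log (∏ t ∈ Finset.Icc 1 n, Z t) :=
    mul_le_mul_of_nonneg_left hlogprod (by positivity)
  have hexpand : (1/β) * (Real.log (c xstar) + p * (-Real.log n)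
      + (-β * ((∑ t ∈ Finset.Icc 1 n, ℓ t xstar) + L)))
      = (1/β) * Real.log (c xstar) - p * Real.log n / β
        - ((∑ t ∈ Finset.Icc 1 n, ℓ t xstar) + L) := by
    field_simp; ring
  rw [hexpand] at hmono
  linarith [hsum, hmono]
end
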